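/- arXiv:2303.11612 — 2 statements merged into one kernel-verified Lean document; each statement's English description precedes it below -/
import Mathlib

section
/- (ST-HOSVD telescoping error bound.) Let A ∈ ℝ^{I_1×⋯×I_N} and let Q_n ∈ ℝ^{I_n×μ_n} have orthonormal columns, n = 1,…,N. Then ‖A − A ×_1 (Q_1 Q_1^T) ⋯ ×_N (Q_N Q_N^T)‖_F^2 ≤ ‖A ×_1 (I − Q_1 Q_1^T)‖_F^2 + ‖(A ×_1 Q_1^T) ×_2 (I − Q_2 Q_2^T)‖_F^2 + ⋯ + ‖(A ×_1 Q_1^T ×_2 Q_2^T ⋯ ×_{N−1} Q_{N−1}^T) ×_N (I − Q_N Q_N^T)‖_F^2. -/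
open Matrix

noncomputable section

/-- Frobenius norm of a tensor (any finitely indexed real array). -/
def tnorm {ι : Type*} [Fintype ι] (A : ι → ℝ) : ℝ :=
  Real.sqrt (∑ x, A x ^ 2)

/-- Mode-`n` product of a tensor with a square matrix (keeps the dimensions). -/
def tmul {N : ℕ} {I : Fin N → ℕ} (A : (∀ n, Fin (I n)) → ℝ) (n : Fin N)
    (B : Matrix (Fin (I n)) (Fin (I n)) ℝ) : (∀ m, Fin (I m)) → ℝ :=
  fun x => ∑ j : Fin (I n), B (x n) j * A (Function.update x n j)

/-- The multi-mode product `A ×₁ P 1 ×₂ P 2 ⋯ ×_N P N` with square matrices. -/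
def multiProj {N : ℕ} {I : Fin N → ℕ} (A : (∀ n, Fin (I n)) → ℝ)
    (P : ∀ n, Matrix (Fin (I n)) (Fin (I n)) ℝ) : (∀ n, Fin (I n)) → ℝ :=
  fun x => ∑ j : ∀ n, Fin (I n), (∏ n, P n (x n) (j n)) * A j

/-- Simultaneous compression `A ×_m (Q m)ᵀ` over all modes `m ∈ S`. -/
def compress {N : ℕ} {I μ : Fin N → ℕ} (A : (∀ n, Fin (I n)) → ℝ)
    (S : Finset (Fin N)) (Q : ∀ n, Matrix (Fin (I n)) (Fin (μ n)) ℝ) :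
    (∀ m, Fin (if m ∈ S then μ m else I m)) → ℝ :=
  fun x => ∑ j : ∀ m : {m : Fin N // m ∈ S}, Fin (I m.val),
    (∏ m : {m : Fin N // m ∈ S}, Q m.val (j m) (Fin.cast (if_pos m.property) (x m.val))) *
      A (fun m => if h : m ∈ S then j ⟨m, h⟩ else Fin.cast (if_neg h) (x m))

/-- Mode-`n` product of a tensor with a (possibly rectangular) matrix. -/
def modeProd {N : ℕ} {I : Fin N → ℕ} {J : ℕ} (A : (∀ n, Fin (I n)) → ℝ)
    (n : Fin N) (B : Matrix (Fin J) (Fin (I n)) ℝ) :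
    (∀ m, Fin (Function.update I n J m)) → ℝ :=
  fun x => ∑ i : Fin (I n),
    B (Fin.cast (Function.update_self n J I) (x n)) i *
      A (fun m => if h : m = n then Fin.cast (congrArg I h).symm i
                  else Fin.cast (Function.update_of_ne h J I) (x m))

/-- Mode-`n` unfolding of a tensor. -/
def unfold {N : ℕ} {D : Fin N → ℕ} (A : (∀ m, Fin (D m)) → ℝ) (n : Fin N) :
    Matrix (Fin (D n)) (∀ m : {m : Fin N // m ≠ n}, Fin (D m.val)) ℝ :=
  Matrix.of fun i x =>
    A (fun m => if h : m = n then Fin.cast (congrArg D h).symm i else x ⟨m, h⟩)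

section lemmas
variable {N : ℕ} {I μ : Fin N → ℕ}

def tinner {ι : Type*} [Fintype ι] (A B : ι → ℝ) : ℝ := ∑ x, A x * B x

lemma tnorm_sq {ι : Type*} [Fintype ι] (A : ι → ℝ) : tnorm A ^ 2 = ∑ x, A x ^ 2 :=
  Real.sq_sqrt (Finset.sum_nonneg fun _ _ => sq_nonneg _)

lemma tnorm_sq_eq_tinner {ι : Type*} [Fintype ι] (A : ι → ℝ) : tnorm A ^ 2 = tinner A A := by
  rw [tnorm_sq]; unfold tinner; congr 1; ext x; ring

lemma prod_delta {κ : Type*} [Fintype κ] {F : κ → Type*} [∀ k, DecidableEq (F k)]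
    (a b : ∀ k, F k) :
    (∏ k, if a k = b k then (1:ℝ) else 0) = if a = b then 1 else 0 := by
  by_cases h : a = b
  · simp [h]
  · obtain ⟨k, hk⟩ := Function.ne_iff.mp h
    rw [if_neg h]
    exact Finset.prod_eq_zero (Finset.mem_univ k) (if_neg hk)

lemma multiProj_one (A : (∀ n, Fin (I n)) → ℝ) :
    multiProj A (fun _ => (1 : Matrix _ _ ℝ)) = A := by
  funext x
  unfold multiProj
  simp only [Matrix.one_apply]
  rw [Finset.sum_eq_single x]
  · simp
  · intro j _ hj
    rw [prod_delta x j, if_neg (Ne.symm hj), zero_mul]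
  · simp

lemma multiProj_comp (A : (∀ n, Fin (I n)) → ℝ)
    (P R : ∀ n, Matrix (Fin (I n)) (Fin (I n)) ℝ) :
    multiProj (multiProj A P) R = multiProj A (fun n => R n * P n) := by
  funext x
  unfold multiProj
  simp only [Finset.mul_sum]
  rw [Finset.sum_comm]
  refine Finset.sum_congr rfl fun k _ => ?_
  simp only [← mul_assoc, ← Finset.prod_mul_distrib]
  rw [← Finset.sum_mul]
  congr 1
  simp_rw [Matrix.mul_apply]
  rw [Finset.prod_univ_sum]
  simp [Fintype.piFinset_univ]

lemma tinner_multiProj (A C : (∀ n, Fin (I n)) → ℝ)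
    (R : ∀ n, Matrix (Fin (I n)) (Fin (I n)) ℝ) :
    tinner (multiProj A R) C = tinner A (multiProj C (fun n => (R n)ᵀ)) := by
  unfold tinner multiProj
  simp only [Finset.sum_mul, Finset.mul_sum]
  rw [Finset.sum_comm]
  refine Finset.sum_congr rfl fun j _ => Finset.sum_congr rfl fun x _ => ?_
  simp only [Matrix.transpose_apply]
  ring

lemma multiProj_zero (A : (∀ n, Fin (I n)) → ℝ)
    {R : ∀ n, Matrix (Fin (I n)) (Fin (I n)) ℝ} {n : Fin N} (h : R n = 0) :
    multiProj A R = 0 := by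
  funext x
  unfold multiProj
  refine Finset.sum_eq_zero fun j _ => ?_
  rw [Finset.prod_eq_zero (Finset.mem_univ n) (by rw [h]; rfl), zero_mul]

lemma sum_update_eq (x : ∀ n, Fin (I n)) (n : Fin N) (f : (∀ n, Fin (I n)) → ℝ) :
    ∑ t : Fin (I n), f (Function.update x n t) =
      ∑ j : ∀ m, Fin (I m), (if ∀ m, m ≠ n → x m = j m then 1 else 0) * f j := by
  classical
  have himg : Finset.univ.filter (fun j : ∀ m, Fin (I m) => ∀ m, m ≠ n → x m = j m)
      = Finset.univ.image (fun t => Function.update x n t) := by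
    ext j
    simp only [Finset.mem_filter, Finset.mem_univ, true_and, Finset.mem_image]
    constructor
    · intro h
      refine ⟨j n, ?_⟩
      funext m
      by_cases hm : m = n
      · subst hm; simp
      · rw [Function.update_of_ne hm]; exact h m hm
    · rintro ⟨t, _, rfl⟩ m hm
      rw [Function.update_of_ne hm]
  simp only [ite_mul, one_mul, zero_mul]
  rw [← Finset.sum_filter, himg]
  refine (Finset.sum_image fun a _ b _ h => ?_).symm
  have := congrFun h n
  simpa using this

lemma prod_erase_delta (x j : ∀ n, Fin (I n)) (n : Fin N) :
    (∏ m ∈ Finset.univ.erase n, if x m = j m then (1:ℝ) else 0)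
      = if ∀ m, m ≠ n → x m = j m then 1 else 0 := by
  by_cases h : ∀ m, m ≠ n → x m = j m
  · rw [if_pos h]
    exact Finset.prod_eq_one fun m hm => if_pos (h m (Finset.mem_erase.1 hm).1)
  · rw [if_neg h]
    push_neg at h
    obtain ⟨m, hm, hne⟩ := h
    exact Finset.prod_eq_zero (Finset.mem_erase.2 ⟨hm, Finset.mem_univ m⟩) (if_neg hne)

lemma tmul_eq_multiProj (A : (∀ n, Fin (I n)) → ℝ) (n : Fin N)
    (M : Matrix (Fin (I n)) (Fin (I n)) ℝ) :
    tmul A n M = multiProj A (Function.update (fun m => (1 : Matrix (Fin (I m)) (Fin (I m)) ℝ)) n M) := by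
  funext x
  unfold tmul multiProj
  have step : ∀ t : Fin (I n), M (x n) t * A (Function.update x n t)
      = (fun j => M (x n) (j n) * A j) (Function.update x n t) := by
    intro t; simp
  rw [Finset.sum_congr rfl fun t _ => step t,
      sum_update_eq x n fun j => M (x n) (j n) * A j]
  refine Finset.sum_congr rfl fun j _ => ?_
  rw [← Finset.mul_prod_erase Finset.univ _ (Finset.mem_univ n), Function.update_self]
  have he : ∏ m ∈ Finset.univ.erase n,
      Function.update (fun m => (1 : Matrix (Fin (I m)) (Fin (I m)) ℝ)) n M m (x m) (j m)
      = ∏ m ∈ Finset.univ.erase n, if x m = j m then (1:ℝ) else 0 := by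
    refine Finset.prod_congr rfl fun m hm => ?_
    rw [Function.update_of_ne (Finset.mem_erase.1 hm).1, Matrix.one_apply]
  rw [he, prod_erase_delta]
  ring

lemma multiProj_update_sub (A : (∀ n, Fin (I n)) → ℝ)
    (R : ∀ n, Matrix (Fin (I n)) (Fin (I n)) ℝ) (n : Fin N)
    (B C : Matrix (Fin (I n)) (Fin (I n)) ℝ) :
    multiProj A (Function.update R n (B - C)) =
      multiProj A (Function.update R n B) - multiProj A (Function.update R n C) := by
  funext x
  unfold multiProj
  simp only [Pi.sub_apply]
  rw [← Finset.sum_sub_distrib]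
  refine Finset.sum_congr rfl fun j _ => ?_
  rw [← sub_mul]
  congr 1
  rw [← Finset.mul_prod_erase Finset.univ _ (Finset.mem_univ n),
      ← Finset.mul_prod_erase Finset.univ _ (Finset.mem_univ n),
      ← Finset.mul_prod_erase Finset.univ _ (Finset.mem_univ n)]
  have he : ∀ (M : Matrix (Fin (I n)) (Fin (I n)) ℝ),
      ∏ m ∈ Finset.univ.erase n, Function.update R n M m (x m) (j m)
        = ∏ m ∈ Finset.univ.erase n, R m (x m) (j m) :=
    fun M => Finset.prod_congr rfl fun m hm => by
      rw [Function.update_of_ne (Finset.mem_erase.1 hm).1]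
  rw [he, he, he, Function.update_self, Function.update_self, Function.update_self,
      Matrix.sub_apply, sub_mul]

def splitE (S : Finset (Fin N)) :
    ((∀ m : {m : Fin N // m ∈ S}, Fin (μ m.val)) × (∀ m : {m : Fin N // ¬ m ∈ S}, Fin (I m.val)))
      ≃ (∀ m, Fin (if m ∈ S then μ m else I m)) where
  toFun p m := if h : m ∈ S then Fin.cast (if_pos h).symm (p.1 ⟨m, h⟩)
               else Fin.cast (if_neg h).symm (p.2 ⟨m, h⟩)
  invFun x := (fun m => Fin.cast (if_pos m.2) (x m.val), fun m => Fin.cast (if_neg m.2) (x m.val))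
  left_inv p := by
    refine Prod.ext ?_ ?_ <;> funext m
    · simp [dif_pos m.2, Fin.ext_iff]
    · simp [dif_neg m.2, Fin.ext_iff]
  right_inv x := by
    funext m
    by_cases h : m ∈ S
    · simp [dif_pos h, Fin.ext_iff]
    · simp [dif_neg h, Fin.ext_iff]

def pairE (S : Finset (Fin N)) :
    ((∀ m : {m : Fin N // m ∈ S}, Fin (I m.val)) × (∀ m : {m : Fin N // ¬ m ∈ S}, Fin (I m.val)))
      ≃ (∀ m, Fin (I m)) :=
  (Equiv.piEquivPiSubtypeProd (fun m => m ∈ S) (fun m => Fin (I m))).symm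

lemma pairE_apply (S : Finset (Fin N))
    (p : (∀ m : {m : Fin N // m ∈ S}, Fin (I m.val)) × (∀ m : {m : Fin N // ¬ m ∈ S}, Fin (I m.val)))
    (m : Fin N) :
    pairE S p m = if h : m ∈ S then p.1 ⟨m, h⟩ else p.2 ⟨m, h⟩ := by
  simp [pairE, Equiv.piEquivPiSubtypeProd]

lemma compress_apply_splitE (S : Finset (Fin N)) (Q : ∀ n, Matrix (Fin (I n)) (Fin (μ n)) ℝ)
    (Z : (∀ n, Fin (I n)) → ℝ)
    (a : ∀ m : {m : Fin N // m ∈ S}, Fin (μ m.val))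
    (b : ∀ m : {m : Fin N // ¬ m ∈ S}, Fin (I m.val)) :
    compress Z S Q (splitE S (a, b)) =
      ∑ k : ∀ m : {m : Fin N // m ∈ S}, Fin (I m.val),
        (∏ m, Q m.val (k m) (a m)) * Z (pairE S (k, b)) := by
  unfold compress
  refine Finset.sum_congr rfl fun k _ => ?_
  congr 1
  · refine Finset.prod_congr rfl fun m _ => ?_
    congr 1
    simp [splitE, dif_pos m.2, Fin.ext_iff]
  · congr 1
    funext m
    rw [pairE_apply]
    by_cases h : m ∈ S
    · simp [dif_pos h]
    · simp [splitE, dif_neg h, Fin.ext_iff]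

def Tcan (S : Finset (Fin N)) (Q : ∀ n, Matrix (Fin (I n)) (Fin (μ n)) ℝ)
    (Z : (∀ n, Fin (I n)) → ℝ) : ℝ :=
  ∑ k : ∀ m : {m : Fin N // m ∈ S}, Fin (I m.val),
  ∑ k' : ∀ m : {m : Fin N // m ∈ S}, Fin (I m.val),
  ∑ b : ∀ m : {m : Fin N // ¬ m ∈ S}, Fin (I m.val),
    (∏ m, ∑ i, Q m.val (k m) i * Q m.val (k' m) i) *
      (Z (pairE S (k, b)) * Z (pairE S (k', b)))

lemma sum_rotate {α β γ : Type*} [Fintype α] [Fintype β] [Fintype γ] (f : α → β → γ → ℝ) :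
    ∑ a, ∑ b, ∑ c, f a b c = ∑ b, ∑ c, ∑ a, f a b c := by
  rw [Finset.sum_comm]
  exact Finset.sum_congr rfl fun _ _ => Finset.sum_comm

lemma compress_lhs (S : Finset (Fin N)) (Q : ∀ n, Matrix (Fin (I n)) (Fin (μ n)) ℝ)
    (Z : (∀ n, Fin (I n)) → ℝ) :
    ∑ x, compress Z S Q x ^ 2 = Tcan S Q Z := by
  classical
  rw [← Equiv.sum_comp (splitE (I := I) (μ := μ) S) (fun x => compress Z S Q x ^ 2)]
  rw [Fintype.sum_prod_type]
  simp only [compress_apply_splitE]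
  simp only [sq, Finset.sum_mul_sum]
  rw [Finset.sum_comm]
  unfold Tcan
  have h1 : ∀ (b : ∀ m : {m : Fin N // ¬ m ∈ S}, Fin (I m.val))
      (k k' : ∀ m : {m : Fin N // m ∈ S}, Fin (I m.val)),
      (∑ a : ∀ m : {m : Fin N // m ∈ S}, Fin (μ m.val),
        ((∏ m, Q m.val (k m) (a m)) * Z (pairE S (k, b))) *
          ((∏ m, Q m.val (k' m) (a m)) * Z (pairE S (k', b))))
        = (∏ m, ∑ i, Q m.val (k m) i * Q m.val (k' m) i) *
            (Z (pairE S (k, b)) * Z (pairE S (k', b))) := by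
    intro b k k'
    have e1 : ∀ a : ∀ m : {m : Fin N // m ∈ S}, Fin (μ m.val),
        ((∏ m, Q m.val (k m) (a m)) * Z (pairE S (k, b))) *
          ((∏ m, Q m.val (k' m) (a m)) * Z (pairE S (k', b)))
          = (∏ m, Q m.val (k m) (a m) * Q m.val (k' m) (a m)) *
              (Z (pairE S (k, b)) * Z (pairE S (k', b))) := by
      intro a; rw [Finset.prod_mul_distrib]; ring
    rw [Finset.sum_congr rfl fun a _ => e1 a, ← Finset.sum_mul]
    congr 1
    rw [Finset.prod_univ_sum]
    simp
  refine Eq.trans (Finset.sum_congr rfl fun b _ => sum_rotate _) ?_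
  refine Eq.trans (Finset.sum_congr rfl fun b _ => Finset.sum_congr rfl fun k _ =>
    Finset.sum_congr rfl fun k' _ => h1 b k k') ?_
  exact sum_rotate _

lemma prod_split (f : Fin N → ℝ) (S : Finset (Fin N)) :
    (∏ m : {m : Fin N // m ∈ S}, f m.val) * (∏ m : {m : Fin N // ¬ m ∈ S}, f m.val)
      = ∏ n, f n := by
  rw [← Finset.prod_subtype S (fun x => Iff.rfl) f,
      ← Finset.prod_subtype Sᶜ (fun x => Finset.mem_compl) f,
      Finset.prod_mul_prod_compl]

lemma compress_rhs (S : Finset (Fin N)) (Q : ∀ n, Matrix (Fin (I n)) (Fin (μ n)) ℝ)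
    (Z : (∀ n, Fin (I n)) → ℝ) :
    tinner (multiProj Z (fun m => if m ∈ S then Q m * (Q m)ᵀ else 1)) Z = Tcan S Q Z := by
  classical
  unfold tinner multiProj Tcan
  simp only [Finset.sum_mul]
  rw [Finset.sum_comm]
  rw [← Equiv.sum_comp (pairE (I := I) S) (fun j => ∑ y : ∀ n, Fin (I n),
    (∏ n, (if n ∈ S then Q n * (Q n)ᵀ else 1) (y n) (j n)) * Z j * Z y)]
  rw [Fintype.sum_prod_type]
  refine Finset.sum_congr rfl fun k _ => ?_
  have hinner : ∀ c : ∀ m : {m : Fin N // ¬ m ∈ S}, Fin (I m.val),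
      (∑ y : ∀ n, Fin (I n),
        (∏ n, (if n ∈ S then Q n * (Q n)ᵀ else 1) (y n) (pairE S (k, c) n)) *
          Z (pairE S (k, c)) * Z y)
      = ∑ k' : ∀ m : {m : Fin N // m ∈ S}, Fin (I m.val),
        ∑ b : ∀ m : {m : Fin N // ¬ m ∈ S}, Fin (I m.val),
          (∏ n, (if n ∈ S then Q n * (Q n)ᵀ else 1) (pairE S (k', b) n) (pairE S (k, c) n)) *
            Z (pairE S (k, c)) * Z (pairE S (k', b)) := by
    intro c
    exact Eq.trans (Equiv.sum_comp (pairE (I := I) S) (fun y =>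
      (∏ n, (if n ∈ S then Q n * (Q n)ᵀ else 1) (y n) (pairE S (k, c) n)) *
        Z (pairE S (k, c)) * Z y)).symm (Fintype.sum_prod_type _)
  refine Eq.trans (Finset.sum_congr rfl fun c _ => hinner c) ?_
  refine Eq.trans (sum_rotate _) ?_
  refine Finset.sum_congr rfl fun k' _ => Finset.sum_congr rfl fun b _ => ?_
  -- collapse the c-sum using the delta
  have hprod : ∀ c : ∀ m : {m : Fin N // ¬ m ∈ S}, Fin (I m.val),
      (∏ n, (if n ∈ S then Q n * (Q n)ᵀ else 1) (pairE S (k', b) n) (pairE S (k, c) n))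
        = (∏ m : {m : Fin N // m ∈ S}, ∑ i, Q m.val (k m) i * Q m.val (k' m) i) *
            (if b = c then 1 else 0) := by
    intro c
    rw [← prod_split
      (fun n => (if n ∈ S then Q n * (Q n)ᵀ else 1) (pairE S (k', b) n) (pairE S (k, c) n)) S]
    congr 1
    · refine Finset.prod_congr rfl fun m _ => ?_
      rw [pairE_apply, pairE_apply, dif_pos m.2, if_pos m.2]
      simp [Matrix.mul_apply, Matrix.transpose_apply, mul_comm]
    · have : ∀ m : {m : Fin N // ¬ m ∈ S},
          (if m.val ∈ S then Q m.val * (Q m.val)ᵀ else 1) (pairE S (k', b) m.val)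
            (pairE S (k, c) m.val) = if b m = c m then (1:ℝ) else 0 := by
        intro m
        simp [pairE_apply, dif_neg m.2, if_neg m.2, Matrix.one_apply]
      rw [Finset.prod_congr rfl fun m _ => this m, prod_delta]
  simp only [hprod]
  simp only [mul_ite, mul_one, mul_zero, ite_mul, zero_mul]
  rw [Finset.sum_ite_eq]
  simp [mul_assoc]

lemma tmul_compress {S : Finset (Fin N)} {n : Fin N} (hn : n ∉ S)
    (A : (∀ m, Fin (I m)) → ℝ) (Q : ∀ m, Matrix (Fin (I m)) (Fin (μ m)) ℝ)
    (M : Matrix (Fin (I n)) (Fin (I n)) ℝ) :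
    tmul (compress A S Q) n (M.submatrix (Fin.cast (if_neg hn)) (Fin.cast (if_neg hn)))
      = compress (tmul A n M) S Q := by
  funext x
  unfold tmul compress
  simp only [Finset.mul_sum]
  rw [Finset.sum_comm]
  refine Finset.sum_congr rfl fun k _ => ?_
  refine Eq.trans (Finset.sum_congr rfl fun j _ => ?_) (Equiv.sum_comp (finCongr (if_neg hn))
    (fun i : Fin (I n) =>
      (∏ m : {m : Fin N // m ∈ S}, Q m.val (k m) (Fin.cast (if_pos m.property) (x m.val))) *
        (M ((fun m => if h : m ∈ S then k ⟨m, h⟩ else Fin.cast (if_neg h) (x m)) n) i *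
          A (Function.update
              (fun m => if h : m ∈ S then k ⟨m, h⟩ else Fin.cast (if_neg h) (x m)) n i))))
  have hprod : (∏ m : {m : Fin N // m ∈ S},
      Q m.val (k m) (Fin.cast (if_pos m.property) (Function.update x n j m.val)))
      = ∏ m : {m : Fin N // m ∈ S}, Q m.val (k m) (Fin.cast (if_pos m.property) (x m.val)) := by
    refine Finset.prod_congr rfl fun m _ => ?_
    rw [Function.update_of_ne (fun h : m.val = n => hn (h ▸ m.property))]
  have hA : (fun m => if h : m ∈ S then k ⟨m, h⟩
        else Fin.cast (if_neg h) (Function.update x n j m))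
      = Function.update
          (fun m => if h : m ∈ S then k ⟨m, h⟩ else Fin.cast (if_neg h) (x m)) n
          (finCongr (if_neg hn) j) := by
    funext m
    by_cases hm : m = n
    · subst hm
      rw [dif_neg hn, Function.update_self, Function.update_self]
      rfl
    · rw [Function.update_of_ne hm, Function.update_of_ne hm]
  have hM : M.submatrix (Fin.cast (if_neg hn)) (Fin.cast (if_neg hn)) (x n) j
      = M ((fun m => if h : m ∈ S then k ⟨m, h⟩ else Fin.cast (if_neg h) (x m)) n)
          (finCongr (if_neg hn) j) := by
    simp only [Matrix.submatrix_apply, dif_neg hn]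
    rfl
  rw [hprod, hA, hM]
  ring

def Rfam (Q : ∀ n, Matrix (Fin (I n)) (Fin (μ n)) ℝ) (n : Fin N) :
    ∀ m, Matrix (Fin (I m)) (Fin (I m)) ℝ :=
  fun m => if (m : ℕ) < (n : ℕ) then Q m * (Q m)ᵀ
    else if m = n then 1 - Q m * (Q m)ᵀ else 1

lemma Rfam_symm (Q : ∀ n, Matrix (Fin (I n)) (Fin (μ n)) ℝ) (n m : Fin N) :
    (Rfam Q n m)ᵀ = Rfam Q n m := by
  unfold Rfam
  split_ifs <;> simp [Matrix.transpose_mul]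

lemma Pidem (Q : ∀ n, Matrix (Fin (I n)) (Fin (μ n)) ℝ) (hQ : ∀ n, (Q n)ᵀ * Q n = 1)
    (m : Fin N) : (Q m * (Q m)ᵀ) * (Q m * (Q m)ᵀ) = Q m * (Q m)ᵀ := by
  rw [Matrix.mul_assoc, ← Matrix.mul_assoc (Q m)ᵀ, hQ m, Matrix.one_mul]

lemma Rfam_idem (Q : ∀ n, Matrix (Fin (I n)) (Fin (μ n)) ℝ) (hQ : ∀ n, (Q n)ᵀ * Q n = 1)
    (n m : Fin N) : Rfam Q n m * Rfam Q n m = Rfam Q n m := by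
  unfold Rfam
  split_ifs
  · exact Pidem Q hQ m
  · simp only [Matrix.sub_mul, Matrix.mul_sub, Matrix.one_mul, Matrix.mul_one, Pidem Q hQ m]
    abel
  · rw [Matrix.one_mul]

lemma tinner_zero {ι : Type*} [Fintype ι] (A : ι → ℝ) : tinner A 0 = 0 := by
  unfold tinner; simp

lemma tele (A : (∀ n, Fin (I n)) → ℝ) (Q : ∀ n, Matrix (Fin (I n)) (Fin (μ n)) ℝ) :
    (fun x => A x - multiProj A (fun n => Q n * (Q n)ᵀ) x)
      = ∑ n : Fin N, multiProj A (Rfam Q n) := by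
  classical
  set g : ℕ → (∀ m, Fin (I m)) → ℝ :=
    fun t => multiProj A (fun (m : Fin N) => if (m : ℕ) < t then Q m * (Q m)ᵀ else 1) with hg
  have h0 : g 0 = A := by
    have e : (fun (m : Fin N) => if (m : ℕ) < 0 then Q m * (Q m)ᵀ else 1)
        = fun m => (1 : Matrix (Fin (I m)) (Fin (I m)) ℝ) := by
      funext m; simp
    show multiProj A (fun (m : Fin N) => if (m : ℕ) < 0 then Q m * (Q m)ᵀ else 1) = A
    rw [e, multiProj_one]
  have hN : g N = multiProj A (fun n => Q n * (Q n)ᵀ) := by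
    have e : (fun (m : Fin N) => if (m : ℕ) < N then Q m * (Q m)ᵀ else 1)
        = fun n => Q n * (Q n)ᵀ := by
      funext m; simp [m.isLt]
    show multiProj A (fun (m : Fin N) => if (m : ℕ) < N then Q m * (Q m)ᵀ else 1) = _
    rw [e]
  have hstep : ∀ n : Fin N, g (n : ℕ) - g ((n : ℕ) + 1) = multiProj A (Rfam Q n) := by
    intro n
    have eA : (fun (m : Fin N) => if (m : ℕ) < (n : ℕ) then Q m * (Q m)ᵀ else 1)
        = Function.update (fun (m : Fin N) => if (m : ℕ) < (n : ℕ) then Q m * (Q m)ᵀ else 1) n 1 := by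
      funext m
      by_cases hm : m = n
      · subst hm; rw [Function.update_self, if_neg (lt_irrefl _)]
      · rw [Function.update_of_ne hm]
    have eB : (fun (m : Fin N) => if (m : ℕ) < (n : ℕ) + 1 then Q m * (Q m)ᵀ else 1)
        = Function.update (fun (m : Fin N) => if (m : ℕ) < (n : ℕ) then Q m * (Q m)ᵀ else 1) n
            (Q n * (Q n)ᵀ) := by
      funext m
      by_cases hm : m = n
      · subst hm; rw [Function.update_self, if_pos (Nat.lt_succ_self _)]
      · rw [Function.update_of_ne hm]
        have hv : (m : ℕ) ≠ (n : ℕ) := fun h => hm (Fin.ext h)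
        refine if_congr ?_ rfl rfl
        rw [Nat.lt_succ_iff]
        exact ⟨fun h => lt_of_le_of_ne h hv, le_of_lt⟩
    have eC : Function.update (fun (m : Fin N) => if (m : ℕ) < (n : ℕ) then Q m * (Q m)ᵀ else 1) n
        (1 - Q n * (Q n)ᵀ) = Rfam Q n := by
      funext m
      by_cases hm : m = n
      · subst hm; rw [Function.update_self]
        unfold Rfam
        rw [if_neg (lt_irrefl _), if_pos rfl]
      · rw [Function.update_of_ne hm]
        unfold Rfam
        simp only [if_neg hm]
    show multiProj A (fun (m : Fin N) => if (m : ℕ) < (n : ℕ) then Q m * (Q m)ᵀ else 1)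
        - multiProj A (fun (m : Fin N) => if (m : ℕ) < (n : ℕ) + 1 then Q m * (Q m)ᵀ else 1)
        = multiProj A (Rfam Q n)
    rw [eA, eB, ← multiProj_update_sub, eC]
  have key : A - multiProj A (fun n => Q n * (Q n)ᵀ) = ∑ n : Fin N, multiProj A (Rfam Q n) := by
    calc A - multiProj A (fun n => Q n * (Q n)ᵀ) = g 0 - g N := by rw [h0, hN]
      _ = ∑ k ∈ Finset.range N, (g k - g (k + 1)) := (Finset.sum_range_sub' g N).symm
      _ = ∑ n : Fin N, (g (n : ℕ) - g ((n : ℕ) + 1)) :=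
          (Fin.sum_univ_eq_sum_range (fun k => g k - g (k + 1)) N).symm
      _ = _ := Finset.sum_congr rfl fun n _ => hstep n
  exact key

lemma inner_DD (A : (∀ n, Fin (I n)) → ℝ) (Q : ∀ n, Matrix (Fin (I n)) (Fin (μ n)) ℝ)
    (n n' : Fin N) :
    tinner (multiProj A (Rfam Q n)) (multiProj A (Rfam Q n'))
      = tinner A (multiProj A (fun m => (Rfam Q n m)ᵀ * Rfam Q n' m)) := by
  rw [tinner_multiProj, multiProj_comp]

lemma orth (A : (∀ n, Fin (I n)) → ℝ) (Q : ∀ n, Matrix (Fin (I n)) (Fin (μ n)) ℝ)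
    (hQ : ∀ n, (Q n)ᵀ * Q n = 1) {n n' : Fin N} (hne : n ≠ n') :
    tinner (multiProj A (Rfam Q n)) (multiProj A (Rfam Q n')) = 0 := by
  rw [inner_DD]
  rcases lt_or_gt_of_ne hne with h | h
  · have h1 : Rfam Q n n = 1 - Q n * (Q n)ᵀ := by
      unfold Rfam; rw [if_neg (lt_irrefl _), if_pos rfl]
    have h2 : Rfam Q n' n = Q n * (Q n)ᵀ := by
      unfold Rfam; rw [if_pos (Fin.lt_def.mp h)]
    have hz : (fun m => (Rfam Q n m)ᵀ * Rfam Q n' m) n = 0 := by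
      show (Rfam Q n n)ᵀ * Rfam Q n' n = 0
      rw [Rfam_symm, h1, h2, Matrix.sub_mul, Matrix.one_mul, Pidem Q hQ n, sub_self]
    rw [multiProj_zero A hz, tinner_zero]
  · have h1 : Rfam Q n n' = Q n' * (Q n')ᵀ := by
      unfold Rfam; rw [if_pos (Fin.lt_def.mp h)]
    have h2 : Rfam Q n' n' = 1 - Q n' * (Q n')ᵀ := by
      unfold Rfam; rw [if_neg (lt_irrefl _), if_pos rfl]
    have hz : (fun m => (Rfam Q n m)ᵀ * Rfam Q n' m) n' = 0 := by
      show (Rfam Q n n')ᵀ * Rfam Q n' n' = 0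
      rw [Rfam_symm, h1, h2, Matrix.mul_sub, Matrix.mul_one, Pidem Q hQ n', sub_self]
    rw [multiProj_zero A hz, tinner_zero]

lemma diag (A : (∀ n, Fin (I n)) → ℝ) (Q : ∀ n, Matrix (Fin (I n)) (Fin (μ n)) ℝ)
    (hQ : ∀ n, (Q n)ᵀ * Q n = 1) (n : Fin N) :
    tinner (multiProj A (Rfam Q n)) (multiProj A (Rfam Q n))
      = tinner A (multiProj A (Rfam Q n)) := by
  rw [inner_DD]
  have e : (fun m => (Rfam Q n m)ᵀ * Rfam Q n m) = Rfam Q n :=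
    funext fun m => by rw [Rfam_symm, Rfam_idem Q hQ]
  rw [e]

lemma tinner_sum_sum {ι κ : Type*} [Fintype ι] [Fintype κ] (f : κ → ι → ℝ) :
    tinner (∑ n, f n) (∑ n, f n) = ∑ n, ∑ n', tinner (f n) (f n') := by
  unfold tinner
  simp only [Finset.sum_apply, Finset.sum_mul_sum]
  exact sum_rotate _

lemma rhs_term (A : (∀ n, Fin (I n)) → ℝ) (Q : ∀ n, Matrix (Fin (I n)) (Fin (μ n)) ℝ)
    (hQ : ∀ n, (Q n)ᵀ * Q n = 1) (n : Fin N) :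
    tnorm (tmul (compress A (Finset.Iio n) Q) n
      (((1 : Matrix (Fin (I n)) (Fin (I n)) ℝ) - Q n * (Q n)ᵀ).submatrix
        (Fin.cast (if_neg (by simp))) (Fin.cast (if_neg (by simp))))) ^ 2
      = tinner A (multiProj A (Rfam Q n)) := by
  have hn : n ∉ Finset.Iio n := by simp
  rw [tmul_compress hn A Q (1 - Q n * (Q n)ᵀ)]
  rw [tnorm_sq, compress_lhs, ← compress_rhs]
  rw [tmul_eq_multiProj, multiProj_comp]
  have e1 : (fun m => (if m ∈ Finset.Iio n then Q m * (Q m)ᵀ else 1) *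
      Function.update (fun m => (1 : Matrix (Fin (I m)) (Fin (I m)) ℝ)) n
        (1 - Q n * (Q n)ᵀ) m) = Rfam Q n := by
    funext m
    by_cases hm : m = n
    · subst hm
      rw [Function.update_self, if_neg (by simp), Matrix.one_mul]
      unfold Rfam
      rw [if_neg (lt_irrefl _), if_pos rfl]
    · rw [Function.update_of_ne hm, Matrix.mul_one]
      unfold Rfam
      simp only [if_neg hm]
      exact if_congr (by rw [Finset.mem_Iio, Fin.lt_def]) rfl rfl
  rw [e1, tinner_multiProj, multiProj_comp]
  have e2 : (fun m => (Rfam Q n m)ᵀ *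
      Function.update (fun m => (1 : Matrix (Fin (I m)) (Fin (I m)) ℝ)) n
        (1 - Q n * (Q n)ᵀ) m) = Rfam Q n := by
    funext m
    by_cases hm : m = n
    · subst hm
      rw [Function.update_self, Rfam_symm,
        (show Rfam Q m m = 1 - Q m * (Q m)ᵀ by
          unfold Rfam; rw [if_neg (lt_irrefl _), if_pos rfl]).symm,
        Rfam_idem Q hQ]
    · rw [Function.update_of_ne hm, Matrix.mul_one, Rfam_symm]
  rw [e2]

end lemmas

/-- ST-HOSVD telescoping error bound (processing order `1, …, N`). -/
theorem stmt7 {N : ℕ} {I μ : Fin N → ℕ} (A : (∀ n, Fin (I n)) → ℝ)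
    (Q : ∀ n, Matrix (Fin (I n)) (Fin (μ n)) ℝ) (hQ : ∀ n, (Q n)ᵀ * Q n = 1) :
    tnorm (fun x => A x - multiProj A (fun n => Q n * (Q n)ᵀ) x) ^ 2 ≤
      ∑ n : Fin N,
        tnorm (tmul (compress A (Finset.Iio n) Q) n
          (((1 : Matrix (Fin (I n)) (Fin (I n)) ℝ) - Q n * (Q n)ᵀ).submatrix
            (Fin.cast (if_neg (by simp))) (Fin.cast (if_neg (by simp))))) ^ 2 := by
  rw [tele A Q, tnorm_sq_eq_tinner, tinner_sum_sum]
  have hdiag : ∀ n : Fin N,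
      (∑ n', tinner (multiProj A (Rfam Q n)) (multiProj A (Rfam Q n')))
        = tinner (multiProj A (Rfam Q n)) (multiProj A (Rfam Q n)) :=
    fun n => Finset.sum_eq_single n (fun n' _ hne => orth A Q hQ (Ne.symm hne))
      (fun h => absurd (Finset.mem_univ n) h)
  rw [Finset.sum_congr rfl fun n _ => hdiag n]
  refine le_of_eq (Finset.sum_congr rfl fun n _ => ?_)
  rw [diag A Q hQ n, ← rhs_term A Q hQ n]

end
end

section
/- (Structural perturbation bound for power-scheme projections.) Let A ∈ ℝ^{I×J}, let Q ∈ ℝ^{I×μ} have orthonormal columns, let R ∈ ℝ^{μ×(μ+K)}, F ∈ ℝ^{(μ+K)×J}, and G ∈ ℝ^{I×(μ+K)}, and let q ≥ 1 be an integer. Then ‖A − Q Q^T A‖_F^2 ≤ 2 ‖(A A^T)^q G F − A‖_F^2 + 2 ‖F‖_2^2 · ‖Q R − (A A^T)^q G‖_F^2. -/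
open Matrix

noncomputable section

/-- Frobenius norm of a real matrix. -/
def frob {m n : Type*} [Fintype m] [Fintype n] (A : Matrix m n ℝ) : ℝ :=
  Real.sqrt (∑ i, ∑ j, (A i j) ^ 2)

/-- Spectral norm of a real matrix. -/
def spec {m n : Type*} [Fintype m] [Fintype n] [DecidableEq n] (A : Matrix m n ℝ) : ℝ :=
  ‖LinearMap.toContinuousLinearMap (Matrix.toEuclideanLin A)‖

/-- Sum of squares of entries (square of the Frobenius norm). -/
def fsq {m n : Type*} [Fintype m] [Fintype n] (A : Matrix m n ℝ) : ℝ :=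
  ∑ i, ∑ j, (A i j) ^ 2

lemma fsq_nonneg {m n : Type*} [Fintype m] [Fintype n] (A : Matrix m n ℝ) : 0 ≤ fsq A := by
  apply Finset.sum_nonneg; intro i _; apply Finset.sum_nonneg; intro j _; positivity

lemma frob_sq {m n : Type*} [Fintype m] [Fintype n] (A : Matrix m n ℝ) :
    frob A ^ 2 = fsq A :=
  Real.sq_sqrt (fsq_nonneg A)

lemma frob_nonneg {m n : Type*} [Fintype m] [Fintype n] (A : Matrix m n ℝ) : 0 ≤ frob A :=
  Real.sqrt_nonneg _

lemma fsq_neg {m n : Type*} [Fintype m] [Fintype n] (A : Matrix m n ℝ) : fsq (-A) = fsq A := by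
  simp [fsq]

lemma fsq_eq_trace {m n : Type*} [Fintype m] [Fintype n] (A : Matrix m n ℝ) :
    fsq A = Matrix.trace (Aᵀ * A) := by
  unfold fsq Matrix.trace
  rw [Finset.sum_comm]
  simp [Matrix.mul_apply, Matrix.diag, sq]

lemma spec_nonneg {m n : Type*} [Fintype m] [Fintype n] [DecidableEq n] (A : Matrix m n ℝ) :
    0 ≤ spec A := norm_nonneg _

lemma spec_transpose {m n : Type*} [Fintype m] [Fintype n] [DecidableEq m] [DecidableEq n]
    (A : Matrix m n ℝ) : spec Aᵀ = spec A := by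
  have hT : Aᵀ = Aᴴ := by ext i j; simp [Matrix.conjTranspose_apply]
  unfold spec
  rw [hT, Matrix.toEuclideanLin_conjTranspose_eq_adjoint,
    LinearMap.adjoint_toContinuousLinearMap]
  exact LinearIsometryEquiv.norm_map ContinuousLinearMap.adjoint _

lemma norm_euclidean_sq {n : Type*} [Fintype n] (v : n → ℝ) :
    ‖(WithLp.equiv 2 (n → ℝ)).symm v‖ ^ 2 = ∑ j, v j ^ 2 := by
  rw [EuclideanSpace.norm_eq, Real.sq_sqrt (by positivity)]
  simp [sq_abs]

lemma proj_contract {m n p : Type*} [Fintype m] [Fintype n] [Fintype p] [DecidableEq p]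
    (Q : Matrix m p ℝ) (hQ : Qᵀ * Q = 1) (M : Matrix m n ℝ) :
    fsq (M - Q * Qᵀ * M) ≤ fsq M := by
  have hexp : (M - Q * Qᵀ * M)ᵀ * (M - Q * Qᵀ * M) = Mᵀ * M - (Qᵀ * M)ᵀ * (Qᵀ * M) := by
    have h1 : (Q * Qᵀ * M)ᵀ = Mᵀ * (Q * Qᵀ) := by
      rw [transpose_mul, transpose_mul, transpose_transpose]
    have h2 : Mᵀ * (Q * Qᵀ) * (Q * Qᵀ * M) = Mᵀ * (Q * Qᵀ * M) := by
      rw [Matrix.mul_assoc Q Qᵀ M, ← Matrix.mul_assoc (Mᵀ * (Q * Qᵀ)) Q (Qᵀ * M),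
        Matrix.mul_assoc Mᵀ (Q * Qᵀ) Q, Matrix.mul_assoc Q Qᵀ Q, hQ, Matrix.mul_one,
        Matrix.mul_assoc]
    have h3 : Mᵀ * (Q * Qᵀ) * M = Mᵀ * (Q * Qᵀ * M) := by rw [Matrix.mul_assoc]
    have h4 : (Qᵀ * M)ᵀ * (Qᵀ * M) = Mᵀ * (Q * Qᵀ * M) := by
      rw [transpose_mul, transpose_transpose, Matrix.mul_assoc, Matrix.mul_assoc]
    rw [transpose_sub, Matrix.sub_mul, Matrix.mul_sub, Matrix.mul_sub, h1, h2, h3, h4]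
    abel
  rw [fsq_eq_trace, hexp, Matrix.trace_sub, fsq_eq_trace M]
  have := fsq_nonneg (Qᵀ * M)
  rw [fsq_eq_trace] at this
  linarith

lemma fsq_mul_le {m n p : Type*} [Fintype m] [Fintype n] [Fintype p]
    [DecidableEq n] [DecidableEq p]
    (M : Matrix m n ℝ) (F : Matrix n p ℝ) :
    fsq (M * F) ≤ spec F ^ 2 * fsq M := by
  have hrow : ∀ i, ∑ j, (M * F) i j ^ 2 ≤ spec F ^ 2 * ∑ k, (M i k) ^ 2 := by
    intro i
    set x : EuclideanSpace ℝ n := (WithLp.equiv 2 (n → ℝ)).symm (M i) with hxdef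
    have hx : ‖x‖ ^ 2 = ∑ k, (M i k) ^ 2 := norm_euclidean_sq _
    have hy : Matrix.toEuclideanLin Fᵀ x = (WithLp.equiv 2 (p → ℝ)).symm (Fᵀ *ᵥ (M i)) := rfl
    have h1 : ∑ j, (M * F) i j ^ 2 = ‖Matrix.toEuclideanLin Fᵀ x‖ ^ 2 := by
      rw [hy, norm_euclidean_sq]
      congr 1; ext j
      simp [Matrix.mul_apply, Matrix.mulVec, dotProduct, Matrix.transpose_apply, mul_comm]
    have h2 : ‖Matrix.toEuclideanLin Fᵀ x‖ ≤ spec Fᵀ * ‖x‖ := by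
      have := (LinearMap.toContinuousLinearMap (Matrix.toEuclideanLin Fᵀ)).le_opNorm x
      simpa [spec] using this
    rw [spec_transpose] at h2
    have h3 : ‖Matrix.toEuclideanLin Fᵀ x‖ ^ 2 ≤ (spec F * ‖x‖) ^ 2 := by
      apply sq_le_sq' _ h2
      have : 0 ≤ spec F * ‖x‖ := mul_nonneg (spec_nonneg F) (norm_nonneg x)
      linarith [norm_nonneg (Matrix.toEuclideanLin Fᵀ x)]
    rw [h1, ← hx]; nlinarith
  calc fsq (M * F) = ∑ i, ∑ j, (M * F) i j ^ 2 := rfl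
    _ ≤ ∑ i, spec F ^ 2 * ∑ k, (M i k) ^ 2 := Finset.sum_le_sum (fun i _ => hrow i)
    _ = spec F ^ 2 * fsq M := by rw [← Finset.mul_sum]; rfl

lemma frob_triangle {m n : Type*} [Fintype m] [Fintype n] (U V : Matrix m n ℝ) :
    frob (U + V) ≤ frob U + frob V := by
  have he : ∀ (M : Matrix m n ℝ),
      frob M = ‖(WithLp.equiv 2 ((m × n) → ℝ)).symm (fun p => M p.1 p.2)‖ := by
    intro M
    rw [frob, EuclideanSpace.norm_eq]
    congr 1
    rw [Fintype.sum_prod_type]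
    simp [sq_abs]
  rw [he, he, he]
  have : (WithLp.equiv 2 ((m × n) → ℝ)).symm (fun p => (U + V) p.1 p.2) =
      (WithLp.equiv 2 ((m × n) → ℝ)).symm (fun p => U p.1 p.2) +
      (WithLp.equiv 2 ((m × n) → ℝ)).symm (fun p => V p.1 p.2) := rfl
  rw [this]
  exact norm_add_le _ _

/-- Structural perturbation bound for power-scheme projections. -/
theorem stmt9 {I J μ K : ℕ} (q : ℕ) (hq : 1 ≤ q)
    (A : Matrix (Fin I) (Fin J) ℝ) (Q : Matrix (Fin I) (Fin μ) ℝ) (hQ : Qᵀ * Q = 1)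
    (R : Matrix (Fin μ) (Fin (μ + K)) ℝ) (F : Matrix (Fin (μ + K)) (Fin J) ℝ)
    (G : Matrix (Fin I) (Fin (μ + K)) ℝ) :
    frob (A - Q * Qᵀ * A) ^ 2 ≤
      2 * frob ((A * Aᵀ) ^ q * G * F - A) ^ 2 +
        2 * spec F ^ 2 * frob (Q * R - (A * Aᵀ) ^ q * G) ^ 2 := by
  set B : Matrix (Fin I) (Fin I) ℝ := (A * Aᵀ) ^ q with hB
  set U : Matrix (Fin I) (Fin J) ℝ := (A - B * G * F) - Q * Qᵀ * (A - B * G * F) with hUdef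
  set V : Matrix (Fin I) (Fin J) ℝ :=
    (B * G - Q * R) * F - Q * Qᵀ * ((B * G - Q * R) * F) with hVdef
  have hc : Q * Qᵀ * (Q * R * F) = Q * R * F := by
    rw [Matrix.mul_assoc Q R F, ← Matrix.mul_assoc (Q * Qᵀ) Q (R * F),
      Matrix.mul_assoc Q Qᵀ Q, hQ, Matrix.mul_one]
  have hsplit : A - Q * Qᵀ * A = U + V := by
    rw [hUdef, hVdef]
    simp only [Matrix.sub_mul, Matrix.mul_sub]
    rw [hc]
    abel
  have hU : fsq U ≤ fsq (A - B * G * F) := proj_contract Q hQ _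
  have hV : fsq V ≤ spec F ^ 2 * fsq (B * G - Q * R) :=
    le_trans (proj_contract Q hQ _) (fsq_mul_le _ _)
  have htri : frob (A - Q * Qᵀ * A) ≤ frob U + frob V := by
    rw [hsplit]; exact frob_triangle U V
  have ha : frob (A - Q * Qᵀ * A) ^ 2 ≤ (frob U + frob V) ^ 2 := by
    apply sq_le_sq' _ htri
    linarith [frob_nonneg U, frob_nonneg V, frob_nonneg (A - Q * Qᵀ * A)]
  have hu2 : frob U ^ 2 ≤ fsq (A - B * G * F) := by rw [frob_sq]; exact hU
  have hv2 : frob V ^ 2 ≤ spec F ^ 2 * fsq (B * G - Q * R) := by rw [frob_sq]; exact hV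
  have h2 : (frob U + frob V) ^ 2 ≤
      2 * fsq (A - B * G * F) + 2 * spec F ^ 2 * fsq (B * G - Q * R) := by
    nlinarith [sq_nonneg (frob U - frob V)]
  have hneg1 : fsq (B * G * F - A) = fsq (A - B * G * F) := by
    rw [← fsq_neg (B * G * F - A), neg_sub]
  have hneg2 : fsq (Q * R - B * G) = fsq (B * G - Q * R) := by
    rw [← fsq_neg (Q * R - B * G), neg_sub]
  calc frob (A - Q * Qᵀ * A) ^ 2 ≤ (frob U + frob V) ^ 2 := ha
    _ ≤ 2 * fsq (A - B * G * F) + 2 * spec F ^ 2 * fsq (B * G - Q * R) := h2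
    _ = 2 * frob (B * G * F - A) ^ 2 + 2 * spec F ^ 2 * frob (Q * R - B * G) ^ 2 := by
        rw [frob_sq, frob_sq, hneg1, hneg2]

end
end
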